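/- For positive semidefinite matrices ρ and σ, ρ^{1/2}(ρ^{-1} # σ)ρ^{1/2} = (ρ^{1/2} σ ρ^{1/2})^{1/2}, where ρ^{-1} denotes the Moore–Penrose pseudoinverse and # the (pseudoinverse-based) matrix geometric mean A # B := A^{1/2}(A^{-1/2} B A^{-1/2})^{1/2} A^{1/2}. -/

import Mathlib

open Matrix Kronecker
open scoped ComplexOrder

noncomputable section
attribute [local instance] Classical.propDecidable

/-- Moore–Penrose pseudoinverse of a square complex matrix. -/
def pinv {n : Type*} [Fintype n] [DecidableEq n] (A : Matrix n n ℂ) : Matrix n n ℂ :=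
  if h : ∃ B : Matrix n n ℂ,
      A * B * A = A ∧ B * A * B = B ∧ (A * B)ᴴ = A * B ∧ (B * A)ᴴ = B * A
  then h.choose else 0

/-- Positive semidefinite square root (junk value `0` if the matrix is not PSD). -/
def msqrt {n : Type*} [Fintype n] [DecidableEq n] (A : Matrix n n ℂ) : Matrix n n ℂ :=
  if h : A.PosSemidef then (h.1.eigenvectorUnitary : Matrix n n ℂ) *
    diagonal (((↑) : ℝ → ℂ) ∘ Real.sqrt ∘ h.1.eigenvalues) *
    (star h.1.eigenvectorUnitary : Matrix n n ℂ) else 0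

/-- `sgn(X) = U sgn(Σ) V*` for an SVD `X = U Σ V*`; equivalently `X (X* X)^{-1/2}`
with the Moore–Penrose pseudoinverse. -/
def msgn {n : Type*} [Fintype n] [DecidableEq n] (X : Matrix n n ℂ) : Matrix n n ℂ :=
  X * pinv (msqrt (Xᴴ * X))

/-- Matrix geometric mean `A # B = A^{1/2} (A^{-1/2} B A^{-1/2})^{1/2} A^{1/2}`
(with Moore–Penrose pseudoinverses). -/
def geo {n : Type*} [Fintype n] [DecidableEq n] (A B : Matrix n n ℂ) : Matrix n n ℂ :=
  msqrt A * msqrt (pinv (msqrt A) * B * pinv (msqrt A)) * msqrt A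

/-- The unnormalized maximally entangled state `|Ω⟩ = ∑ i, |i⟩ ⊗ |i⟩`. -/
def omegaVec (d : ℕ) : Fin d × Fin d → ℂ := fun p => if p.1 = p.2 then 1 else 0

/-- Reduced density matrix of `|C⟩⟨C|` on the first subsystem
(partial trace over the second subsystem). -/
def reducedA {d : ℕ} (C : Fin d × Fin d → ℂ) : Matrix (Fin d) (Fin d) ℂ :=
  Matrix.of fun i j => ∑ k, C (i, k) * star (C (j, k))

/-- Partial trace over the first subsystem of the operator `|D⟩⟨C|`. -/
def trA {d : ℕ} (D C : Fin d × Fin d → ℂ) : Matrix (Fin d) (Fin d) ℂ :=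
  Matrix.of fun j l => ∑ i, D (i, j) * star (C (i, l))

/-- `ℓ²→ℓ²` operator norm (largest singular value). -/
def opNorm {n : Type*} [Fintype n] [DecidableEq n] (A : Matrix n n ℂ) : ℝ :=
  ‖(Matrix.toEuclideanCLM (𝕜 := ℂ) A : EuclideanSpace ℂ n →L[ℂ] EuclideanSpace ℂ n)‖

/-- `P` is the orthogonal projection onto the image (column space) of `A`. -/
def IsOrthProjOnto {n : Type*} [Fintype n] [DecidableEq n] (P A : Matrix n n ℂ) : Prop :=
  Pᴴ = P ∧ P * P = P ∧ LinearMap.range P.mulVecLin = LinearMap.range A.mulVecLin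

/-- `η` is the smallest nonzero eigenvalue of the Hermitian matrix `M`. -/
def IsSmallestNonzeroEigenvalue {n : Type*} [Fintype n] [DecidableEq n]
    (M : Matrix n n ℂ) (η : ℝ) : Prop :=
  ∃ hM : M.IsHermitian, η ≠ 0 ∧ (∃ i, hM.eigenvalues i = η) ∧
    ∀ i, hM.eigenvalues i ≠ 0 → η ≤ hM.eigenvalues i


section GeoAux
namespace GeoAux

open scoped MatrixOrder

variable {n : Type*} [Fintype n] [DecidableEq n]

lemma msqrt_eq_cfc {A : Matrix n n ℂ} (hA : A.PosSemidef) : msqrt A = CFC.sqrt A := by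
  rw [msqrt, dif_pos hA, CFC.sqrt_eq_cfc, cfc_nnreal_eq_real _ A, hA.1.cfc_eq]
  simp only [IsHermitian.cfc, Unitary.conjStarAlgAut_apply]
  congr 3
  funext i
  simp [Real.coe_sqrt, Real.coe_toNNReal', max_eq_left (hA.eigenvalues_nonneg i)]

omit [DecidableEq n] in
lemma mp_unique {A B C : Matrix n n ℂ}
    (hB1 : A * B * A = A) (hB2 : B * A * B = B) (hB3 : (A * B)ᴴ = A * B) (hB4 : (B * A)ᴴ = B * A)
    (hC1 : A * C * A = A) (hC2 : C * A * C = C) (hC3 : (A * C)ᴴ = A * C) (hC4 : (C * A)ᴴ = C * A) :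
    B = C := by
  have hAB : A * B = A * C := by
    calc A * B = (A * B)ᴴ := hB3.symm
    _ = ((A * C * A) * B)ᴴ := by rw [hC1]
    _ = ((A * C) * (A * B))ᴴ := by simp only [Matrix.mul_assoc]
    _ = (A * B)ᴴ * (A * C)ᴴ := by rw [Matrix.conjTranspose_mul]
    _ = (A * B) * (A * C) := by rw [hB3, hC3]
    _ = (A * B * A) * C := by simp only [Matrix.mul_assoc]
    _ = A * C := by rw [hB1]
  have hBA : B * A = C * A := by
    calc B * A = (B * A)ᴴ := hB4.symm
    _ = (B * (A * C * A))ᴴ := by rw [hC1]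
    _ = ((B * A) * (C * A))ᴴ := by simp only [Matrix.mul_assoc]
    _ = (C * A)ᴴ * (B * A)ᴴ := by rw [Matrix.conjTranspose_mul]
    _ = (C * A) * (B * A) := by rw [hB4, hC4]
    _ = C * (A * B * A) := by simp only [Matrix.mul_assoc]
    _ = C * A := by rw [hB1]
  calc B = B * A * B := hB2.symm
  _ = B * (A * C) := by rw [Matrix.mul_assoc, hAB]
  _ = (C * A) * C := by rw [← Matrix.mul_assoc, hBA]
  _ = C := hC2

lemma pinv_eq {A B : Matrix n n ℂ}
    (h1 : A * B * A = A) (h2 : B * A * B = B) (h3 : (A * B)ᴴ = A * B) (h4 : (B * A)ᴴ = B * A) :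
    pinv A = B := by
  have hex : ∃ B : Matrix n n ℂ,
      A * B * A = A ∧ B * A * B = B ∧ (A * B)ᴴ = A * B ∧ (B * A)ᴴ = B * A := ⟨B, h1, h2, h3, h4⟩
  rw [pinv, dif_pos hex]
  obtain ⟨c1, c2, c3, c4⟩ := hex.choose_spec
  exact mp_unique c1 c2 c3 c4 h1 h2 h3 h4

lemma msqrt_eq {A B : Matrix n n ℂ} (hB : B.PosSemidef) (h : B * B = A) : msqrt A = B := by
  have hA : A.PosSemidef := by
    have := hB.pow 2
    rwa [pow_two, h] at this
  rw [msqrt_eq_cfc hA]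
  exact CFC.sqrt_unique h hB.nonneg

lemma msqrt_psd {A : Matrix n n ℂ} (hA : A.PosSemidef) : (msqrt A).PosSemidef := by
  rw [msqrt_eq_cfc hA]; exact (CFC.sqrt_nonneg _).posSemidef

lemma msqrt_mul_self {A : Matrix n n ℂ} (hA : A.PosSemidef) : msqrt A * msqrt A = A := by
  rw [msqrt_eq_cfc hA]; exact CFC.sqrt_mul_sqrt_self A hA.nonneg

lemma cD_mul (U : Matrix n n ℂ) (hU : star U * U = 1) (f g : n → ℂ) :
    (U * diagonal f * star U) * (U * diagonal g * star U)
      = U * diagonal (fun i => f i * g i) * star U := by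
  have h : (U * diagonal f * star U) * (U * diagonal g * star U)
      = U * (diagonal f * (star U * U) * diagonal g) * star U := by
    simp only [Matrix.mul_assoc]
  rw [h, hU, Matrix.mul_one, Matrix.diagonal_mul_diagonal]

lemma cD_conjTranspose (U : Matrix n n ℂ) (f : n → ℂ) :
    (U * diagonal f * star U)ᴴ = U * diagonal (fun i => star (f i)) * star U := by
  rw [Matrix.conjTranspose_mul, Matrix.conjTranspose_mul, Matrix.diagonal_conjTranspose,
    Matrix.star_eq_conjTranspose, Matrix.conjTranspose_conjTranspose, Matrix.mul_assoc]
  rfl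

lemma cD_psd (U : Matrix n n ℂ) (f : n → ℝ) (hf : ∀ i, 0 ≤ f i) :
    (U * diagonal (fun i => (f i : ℂ)) * star U).PosSemidef := by
  have hd : (diagonal (fun i => (f i : ℂ))).PosSemidef :=
    Matrix.posSemidef_diagonal_iff.mpr fun i => by
      exact_mod_cast Complex.zero_le_real.mpr (hf i)
  have := hd.mul_mul_conjTranspose_same U
  rwa [Matrix.star_eq_conjTranspose]

end GeoAux
end GeoAux

theorem geo_mean_sandwich {n : Type*} [Fintype n] [DecidableEq n]
    (ρ σ : Matrix n n ℂ) (hρ : ρ.PosSemidef) (hσ : σ.PosSemidef) :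
    msqrt ρ * geo (pinv ρ) σ * msqrt ρ = msqrt (msqrt ρ * σ * msqrt ρ) := by
  have hH : ρ.IsHermitian := hρ.1
  set U : Matrix n n ℂ := (hH.eigenvectorUnitary : Matrix n n ℂ) with hUdef
  have hU : star U * U = 1 := Matrix.mem_unitaryGroup_iff'.mp hH.eigenvectorUnitary.2
  set d : n → ℝ := hH.eigenvalues with hddef
  set cd : (n → ℝ) → Matrix n n ℂ := fun f => U * diagonal (fun i => (f i : ℂ)) * star U
    with hcddef
  have cdcongr : ∀ f g : n → ℝ, (∀ i, f i = g i) → cd f = cd g := by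
    intro f g h
    have hfg : (fun i => (f i : ℂ)) = fun i => (g i : ℂ) := funext fun i => by rw [h i]
    simp only [hcddef]
    rw [hfg]
  have hmulR : ∀ f g : n → ℝ, cd f * cd g = cd (fun i => f i * g i) := by
    intro f g
    have h2 : (fun i => (f i : ℂ) * (g i : ℂ)) = fun i => ((f i * g i : ℝ) : ℂ) := by
      funext i; push_cast; ring
    simp only [hcddef]
    rw [GeoAux.cD_mul U hU, h2]
  have hermR : ∀ f : n → ℝ, (cd f)ᴴ = cd f := by
    intro f
    simp only [hcddef]
    rw [GeoAux.cD_conjTranspose U]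
    congr 1
    congr 1
    funext i
    simp [Complex.conj_ofReal]
  have hρeq : ρ = cd d := by
    rw [hcddef]
    exact hH.spectral_theorem
  set e : n → ℝ := fun i => Real.sqrt (d i) with hedef
  set ei : n → ℝ := fun i => (e i)⁻¹ with heidef
  have hdnn : ∀ i, 0 ≤ d i := hρ.eigenvalues_nonneg
  have henn : ∀ i, 0 ≤ e i := fun i => Real.sqrt_nonneg _
  have hee : ∀ i, e i * e i = d i := fun i => Real.mul_self_sqrt (hdnn i)
  set S : Matrix n n ℂ := cd e with hSdef
  set T : Matrix n n ℂ := cd ei with hTdef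
  have heei : ∀ i, e i * ei i * e i = e i := by
    intro i
    rcases eq_or_ne (e i) 0 with h | h
    · simp [heidef, h]
    · simp [heidef, h]
  have heie : ∀ i, ei i * e i * ei i = ei i := by
    intro i
    rcases eq_or_ne (e i) 0 with h | h
    · simp [heidef, h]
    · simp [heidef, h]
  have heiei : ∀ i, ei i * ei i = (d i)⁻¹ := by
    intro i
    rw [heidef]
    rw [← mul_inv, hee]
  have hSS : S * S = ρ := by
    rw [hSdef, hmulR, hρeq]
    exact cdcongr _ _ hee
  have hSpsd : S.PosSemidef := GeoAux.cD_psd U e henn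
  have hTpsd : T.PosSemidef := GeoAux.cD_psd U ei (fun i => inv_nonneg.mpr (henn i))
  have hmS : msqrt ρ = S := GeoAux.msqrt_eq hSpsd hSS
  have hSTS : S * T * S = S := by
    rw [hSdef, hTdef, hmulR, hmulR]
    exact cdcongr _ _ heei
  have hTST : T * S * T = T := by
    rw [hSdef, hTdef, hmulR, hmulR]
    exact cdcongr _ _ heie
  have hST_herm : (S * T)ᴴ = S * T := by
    rw [hSdef, hTdef, hmulR, hermR]
  have hTS_herm : (T * S)ᴴ = T * S := by
    rw [hSdef, hTdef, hmulR, hermR]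
  have hTS_eq : T * S = S * T := by
    rw [hSdef, hTdef, hmulR, hmulR]
    exact cdcongr _ _ fun i => mul_comm _ _
  have hTT : T * T = cd (fun i => (d i)⁻¹) := by
    rw [hTdef, hmulR]
    exact cdcongr _ _ heiei
  have hpinvρ : pinv ρ = T * T := by
    apply GeoAux.pinv_eq
    · rw [hTT, hρeq, hmulR, hmulR]
      refine cdcongr _ _ fun i => ?_
      rcases eq_or_ne (d i) 0 with h | h
      · simp [h]
      · field_simp
    · rw [hTT, hρeq, hmulR, hmulR]
      refine cdcongr _ _ fun i => ?_
      rcases eq_or_ne (d i) 0 with h | h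
      · simp [h]
      · field_simp
    · rw [hTT, hρeq, hmulR, hermR]
    · rw [hTT, hρeq, hmulR, hermR]
  have hmT : msqrt (pinv ρ) = T := GeoAux.msqrt_eq hTpsd hpinvρ.symm
  have hpinvT : pinv T = S := GeoAux.pinv_eq hTST hSTS hTS_herm hST_herm
  have hX : (S * σ * S).PosSemidef := by
    have h := hσ.mul_mul_conjTranspose_same S
    rwa [hSpsd.1] at h
  set M : Matrix n n ℂ := msqrt (S * σ * S) with hMdef
  have hMeq : M = msqrt (S * σ * S) := hMdef
  have hMpsd : M.PosSemidef := by rw [hMeq]; exact GeoAux.msqrt_psd hX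
  have hMM : M * M = S * σ * S := by rw [hMeq]; exact GeoAux.msqrt_mul_self hX
  have hXherm : (S * σ * S)ᴴ = S * σ * S := hX.1
  have hMherm : Mᴴ = M := hMpsd.1
  have hPX : (S * T) * (S * σ * S) = S * σ * S := by
    calc (S * T) * (S * σ * S) = (S * T * S) * σ * S := by simp only [Matrix.mul_assoc]
    _ = S * σ * S := by rw [hSTS]
  have hXP : (S * σ * S) * (S * T) = S * σ * S := by
    calc (S * σ * S) * (S * T) = (((S * σ * S) * (S * T))ᴴ)ᴴ := by
          rw [conjTranspose_conjTranspose]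
    _ = ((S * T)ᴴ * (S * σ * S)ᴴ)ᴴ := by rw [Matrix.conjTranspose_mul]
    _ = ((S * T) * (S * σ * S))ᴴ := by rw [hST_herm, hXherm]
    _ = S * σ * S := by rw [hPX, hXherm]
  have hPM : (S * T) * M = M := by
    have hN : (M - (S * T) * M) * (M - (S * T) * M)ᴴ = 0 := by
      have hMP' : ((S * T) * M)ᴴ = M * (S * T) := by
        rw [Matrix.conjTranspose_mul, hMherm, hST_herm]
      rw [Matrix.conjTranspose_sub, hMherm, hMP']
      rw [Matrix.sub_mul, Matrix.mul_sub, Matrix.mul_sub]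
      have e1 : M * (M * (S * T)) = (S * σ * S) * (S * T) := by rw [← Matrix.mul_assoc, hMM]
      have e2 : (S * T) * M * M = (S * T) * (S * σ * S) := by rw [Matrix.mul_assoc, hMM]
      have e3 : (S * T) * M * (M * (S * T)) = (S * T) * ((S * σ * S) * (S * T)) := by
        simp only [Matrix.mul_assoc]
        rw [← Matrix.mul_assoc M M (S * T), hMM]
        simp only [Matrix.mul_assoc]
      rw [e1, e2, e3, hXP, hMM, hPX]
      simp
    have h0 : M - (S * T) * M = 0 := Matrix.self_mul_conjTranspose_eq_zero.mp hN
    exact (sub_eq_zero.mp h0).symm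
  have hMP : M * (S * T) = M := by
    calc M * (S * T) = ((S * T)ᴴ * Mᴴ)ᴴ := by
          rw [Matrix.conjTranspose_mul, conjTranspose_conjTranspose, conjTranspose_conjTranspose]
    _ = ((S * T) * M)ᴴ := by rw [hST_herm, hMherm]
    _ = M := by rw [hPM, hMherm]
  rw [hmS, geo, hmT, hpinvT, ← hMdef]
  calc S * (T * M * T) * S = (S * T) * (M * (T * S)) := by simp only [Matrix.mul_assoc]
  _ = (S * T) * (M * (S * T)) := by rw [hTS_eq]
  _ = M := by rw [hMP, hPM]
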